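/- Let X be a complex Banach space and let A, B, C be bounded linear operators on X satisfying (ABA)B = (ACA)B and (ABA)C = (ACA)C. Then the g-Drazin spectrum of AC equals the g-Drazin spectrum of BA, i.e., {λ ∈ ℂ : λI − AC has no g-Drazin inverse} = {λ ∈ ℂ : λI − BA has no g-Drazin inverse}. -/

import Mathlib

/-- An element of a complex Banach algebra is quasinilpotent if its
spectral radius is zero. -/
def IsQuasinilpotentB {A : Type*} [NormedRing A] [NormedAlgebra ℂ A] (q : A) : Prop :=
  spectralRadius ℂ q = 0

/-- `e` is a g-Drazin inverse of `a`. -/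
def IsGDrazinInverseB {A : Type*} [NormedRing A] [NormedAlgebra ℂ A] (a e : A) : Prop :=
  e = e * a * e ∧ (∀ y : A, y * a = a * y → e * y = y * e) ∧
    IsQuasinilpotentB (a - a ^ 2 * e)

/-- The g-Drazin spectrum. -/
def gDrazinSpectrum {A : Type*} [NormedRing A] [NormedAlgebra ℂ A] (t : A) : Set ℂ :=
  {lam : ℂ | ¬ ∃ e, IsGDrazinInverseB (lam • (1 : A) - t) e}

namespace GDProof

open ContinuousLinearMap
open scoped ENNReal NNReal

lemma comm_of_inv {R : Type*} [Ring R] {s k w : R} (h1 : s * k = 1) (h2 : k * s = 1)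
    (h : w * s = s * w) : w * k = k * w := by
  calc w * k = (k * s) * (w * k) := by rw [h2, one_mul]
    _ = k * (s * (w * k)) := by rw [mul_assoc k s (w * k)]
    _ = k * ((s * w) * k) := by rw [mul_assoc s w k]
    _ = k * ((w * s) * k) := by rw [h]
    _ = k * (w * (s * k)) := by rw [mul_assoc w s k]
    _ = k * w := by rw [h1, mul_one]

lemma sr_zero_iff {A : Type*} [NormedRing A] [NormedAlgebra ℂ A] (a : A) :
    spectralRadius ℂ a = 0 ↔ spectrum ℂ a ⊆ {0} := by
  constructor
  · intro h k hk
    have hle : (‖k‖₊ : ℝ≥0∞) ≤ spectralRadius ℂ a := by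
      simp only [spectralRadius]
      exact le_iSup₂ (f := fun k (_ : k ∈ spectrum ℂ a) => (‖k‖₊ : ℝ≥0∞)) k hk
    rw [h, le_zero_iff] at hle
    have hk0 : ‖k‖₊ = 0 := by exact_mod_cast hle
    simpa using nnnorm_eq_zero.mp hk0
  · intro h
    refine le_antisymm ?_ (zero_le)
    simp only [spectralRadius]
    refine iSup₂_le fun k hk => ?_
    have : k = 0 := h hk
    simp [this]

lemma isUnit_smul_one {A : Type*} [NormedRing A] [NormedAlgebra ℂ A] {c : ℂ} (hc : c ≠ 0) :
    IsUnit (c • (1 : A)) :=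
  ⟨⟨c • 1, c⁻¹ • 1, by simp [smul_smul, mul_inv_cancel₀ hc, inv_mul_cancel₀ hc], by
    simp [smul_smul, mul_inv_cancel₀ hc, inv_mul_cancel₀ hc]⟩, rfl⟩

lemma exists_inv_smul_sub {A : Type*} [NormedRing A] [NormedAlgebra ℂ A] (q : A)
    (hq : spectralRadius ℂ q = 0) (c : ℂ) (hc : c ≠ 0) :
    ∃ k, (c • (1 : A) - q) * k = 1 ∧ k * (c • (1 : A) - q) = 1 := by
  have hmem : c ∉ spectrum ℂ q := fun hmem => hc (by simpa using (sr_zero_iff q).mp hq hmem)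
  have hu : IsUnit (c • (1 : A) - q) := by
    have := spectrum.notMem_iff.mp hmem
    rwa [Algebra.algebraMap_eq_smul_one] at this
  obtain ⟨u, hu⟩ := hu
  exact ⟨↑u⁻¹, by rw [← hu]; exact u.mul_inv, by rw [← hu]; exact u.inv_mul⟩

lemma exists_inv_one_sub {A : Type*} [NormedRing A] [NormedAlgebra ℂ A] (q : A)
    (hq : spectralRadius ℂ q = 0) :
    ∃ k, (1 - q) * k = 1 ∧ k * (1 - q) = 1 := by
  obtain ⟨k, h1, h2⟩ := exists_inv_smul_sub q hq 1 one_ne_zero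
  rw [one_smul] at h1 h2
  exact ⟨k, h1, h2⟩

lemma exists_inv_one_add {A : Type*} [NormedRing A] [NormedAlgebra ℂ A] (q : A)
    (hq : spectralRadius ℂ q = 0) :
    ∃ j, (1 + q) * j = 1 ∧ j * (1 + q) = 1 := by
  obtain ⟨k, h1, h2⟩ := exists_inv_smul_sub q hq (-1) (by norm_num)
  have he : (-1 : ℂ) • (1 : A) - q = -(1 + q) := by
    simp [neg_add, sub_eq_add_neg, add_comm]
  rw [he] at h1 h2
  refine ⟨-k, ?_, ?_⟩
  · rw [mul_neg, ← neg_mul]; exact h1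
  · rw [neg_mul, ← mul_neg]; exact h2

lemma sr_smul_zero {A : Type*} [NormedRing A] [NormedAlgebra ℂ A] {w : A}
    (h : spectralRadius ℂ w = 0) (c : ℂ) : spectralRadius ℂ (c • w) = 0 := by
  rw [sr_zero_iff] at h ⊢
  intro μ hμ
  by_contra hμ0
  have hμne : μ ≠ 0 := fun hh => hμ0 (by simp [hh])
  rcases eq_or_ne c 0 with rfl | hc
  · rw [zero_smul] at hμ
    apply spectrum.notMem_iff.mpr ?_ hμ
    rw [Algebra.algebraMap_eq_smul_one, sub_zero]
    exact isUnit_smul_one hμne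
  · have hmem : c⁻¹ * μ ∈ spectrum ℂ w := by
      by_contra hnm
      have hu := spectrum.notMem_iff.mp hnm
      rw [Algebra.algebraMap_eq_smul_one] at hu
      have hkey : (c • (1 : A)) * ((c⁻¹ * μ) • (1 : A) - w) = μ • (1 : A) - c • w := by
        rw [smul_mul_assoc, one_mul, smul_sub, smul_smul]
        congr 2
        field_simp
      have : IsUnit (μ • (1 : A) - c • w) := by
        rw [← hkey]; exact (isUnit_smul_one hc).mul hu
      exact spectrum.notMem_iff.mpr (by rwa [Algebra.algebraMap_eq_smul_one]) hμ
    have h0 : c⁻¹ * μ = 0 := h hmem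
    apply hμne
    field_simp at h0
    simpa using h0


section Rect

variable {E : Type*} [NormedAddCommGroup E] [NormedSpace ℂ E]
variable {F : Type*} [NormedAddCommGroup F] [NormedSpace ℂ F]

lemma spec_swap (f : E →L[ℂ] F) (g : F →L[ℂ] E) :
    spectrum ℂ (g.comp f) ⊆ spectrum ℂ (f.comp g) ∪ {0} := by
  intro μ hμ
  by_contra hcon
  simp only [Set.mem_union, Set.mem_singleton_iff, not_or] at hcon
  obtain ⟨h1, h0⟩ := hcon
  have hu : IsUnit (μ • (1 : F →L[ℂ] F) - f.comp g) := by
    have := spectrum.notMem_iff.mp h1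
    rwa [Algebra.algebraMap_eq_smul_one] at this
  obtain ⟨U, hU⟩ := hu
  set R : F →L[ℂ] F := ↑U⁻¹ with hR
  have hR1 : (μ • (1 : F →L[ℂ] F) - f.comp g) * R = 1 := by rw [← hU]; exact U.mul_inv
  have hR2 : R * (μ • (1 : F →L[ℂ] F) - f.comp g) = 1 := by rw [← hU]; exact U.inv_mul
  have hw1 : ∀ w : F, f (g (R w)) = μ • R w - w := by
    intro w
    have := DFunLike.congr_fun hR1 w
    simp only [ContinuousLinearMap.mul_apply, ContinuousLinearMap.sub_apply,
      ContinuousLinearMap.smul_apply, ContinuousLinearMap.one_apply,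
      ContinuousLinearMap.comp_apply] at this
    linear_combination (norm := module) -this
  have hw2 : ∀ w : F, R (f (g w)) = μ • R w - w := by
    intro w
    have := DFunLike.congr_fun hR2 w
    simp only [ContinuousLinearMap.mul_apply, ContinuousLinearMap.sub_apply,
      ContinuousLinearMap.smul_apply, ContinuousLinearMap.one_apply,
      ContinuousLinearMap.comp_apply, map_sub, map_smul] at this
    linear_combination (norm := module) -this
  have hunit : IsUnit (μ • (1 : E →L[ℂ] E) - g.comp f) := by
    refine ⟨⟨μ • (1 : E →L[ℂ] E) - g.comp f,
      μ⁻¹ • (1 + g.comp (R.comp f)), ?_, ?_⟩, rfl⟩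
    · ext v
      simp only [ContinuousLinearMap.mul_apply, ContinuousLinearMap.sub_apply,
        ContinuousLinearMap.add_apply, ContinuousLinearMap.smul_apply,
        ContinuousLinearMap.one_apply, ContinuousLinearMap.comp_apply,
        map_add, map_smul]
      rw [hw1 (f v)]
      simp only [map_sub, map_smul, smul_sub, smul_smul]
      match_scalars <;> field_simp <;> ring
    · ext v
      simp only [ContinuousLinearMap.mul_apply, ContinuousLinearMap.sub_apply,
        ContinuousLinearMap.add_apply, ContinuousLinearMap.smul_apply,
        ContinuousLinearMap.one_apply, ContinuousLinearMap.comp_apply,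
        map_add, map_smul, map_sub]
      rw [hw2 (f v)]
      simp only [map_sub, map_smul, smul_sub, smul_smul]
      match_scalars <;> field_simp <;> ring
  exact spectrum.notMem_iff.mpr (by rwa [Algebra.algebraMap_eq_smul_one]) hμ


/-- `Phi x y m = y ∘ m ∘ x`. -/
def Phi (x : F →L[ℂ] E) (y : E →L[ℂ] F) (m : E →L[ℂ] E) : F →L[ℂ] F :=
  (y.comp m).comp x

/-- `Psi x y z = x ∘ z ∘ y`. -/
def Psi (x : F →L[ℂ] E) (y : E →L[ℂ] F) (z : F →L[ℂ] F) : E →L[ℂ] E :=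
  (x.comp z).comp y

variable (x : F →L[ℂ] E) (y : E →L[ℂ] F)

lemma Phi_mul (m n : E →L[ℂ] E) :
    Phi x y m * Phi x y n = Phi x y (m * x.comp y * n) := by
  ext v
  simp [Phi, ContinuousLinearMap.mul_apply, ContinuousLinearMap.comp_apply]

lemma Phi_one : Phi x y 1 = y.comp x := by
  ext v; simp [Phi]

lemma Phi_sub (m n : E →L[ℂ] E) : Phi x y (m - n) = Phi x y m - Phi x y n := by
  ext v; simp [Phi]

lemma Phi_mul_b (m : E →L[ℂ] E) :
    Phi x y m * (y.comp x) = Phi x y (m * (x.comp y)) := by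
  ext v
  simp [Phi, ContinuousLinearMap.mul_apply, ContinuousLinearMap.comp_apply]

lemma Phi_b_mul (m : E →L[ℂ] E) :
    (y.comp x) * Phi x y m = Phi x y ((x.comp y) * m) := by
  ext v
  simp [Phi, ContinuousLinearMap.mul_apply, ContinuousLinearMap.comp_apply]

lemma Phi_z_right (m : E →L[ℂ] E) (z : F →L[ℂ] F) :
    Phi x y m * z * (y.comp x) = Phi x y (m * Psi x y z) := by
  ext v
  simp [Phi, Psi, ContinuousLinearMap.mul_apply, ContinuousLinearMap.comp_apply]

lemma Phi_z_left (m : E →L[ℂ] E) (z : F →L[ℂ] F) :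
    (y.comp x) * z * Phi x y m = Phi x y (Psi x y z * m) := by
  ext v
  simp [Phi, Psi, ContinuousLinearMap.mul_apply, ContinuousLinearMap.comp_apply]

lemma Psi_a_right (z : F →L[ℂ] F) :
    Psi x y z * (x.comp y) = Psi x y (z * (y.comp x)) := by
  ext v
  simp [Psi, ContinuousLinearMap.mul_apply, ContinuousLinearMap.comp_apply]

lemma Psi_a_left (z : F →L[ℂ] F) :
    (x.comp y) * Psi x y z = Psi x y ((y.comp x) * z) := by
  ext v
  simp [Psi, ContinuousLinearMap.mul_apply, ContinuousLinearMap.comp_apply]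

lemma Phi_qn (m : E →L[ℂ] E) (h : spectralRadius ℂ (m * (x.comp y)) = 0) :
    spectralRadius ℂ (Phi x y m) = 0 := by
  rw [sr_zero_iff] at h ⊢
  have heq : Phi x y m = y.comp ((m.comp x)) := by
    ext v; simp [Phi]
  have heq2 : (m.comp x).comp y = m * (x.comp y) := by
    ext v
    simp [ContinuousLinearMap.mul_apply, ContinuousLinearMap.comp_apply]
  intro μ hμ
  rw [heq] at hμ
  have := spec_swap (m.comp x) y hμ
  rw [heq2] at this
  rcases this with h' | h'
  · exact h h'
  · exact h'

lemma chainPhi (m : E →L[ℂ] E) (z : F →L[ℂ] F)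
    (hz : z * (y.comp x) = (y.comp x) * z)
    (hm : m * Psi x y z = Psi x y z * m) :
    Phi x y (m * (x.comp y)) * z = z * Phi x y ((x.comp y) * m) := by
  calc Phi x y (m * (x.comp y)) * z = (Phi x y m * (y.comp x)) * z := by rw [Phi_mul_b]
    _ = Phi x y m * ((y.comp x) * z) := by rw [mul_assoc]
    _ = Phi x y m * (z * (y.comp x)) := by rw [← hz]
    _ = Phi x y m * z * (y.comp x) := by rw [mul_assoc]
    _ = Phi x y (m * Psi x y z) := Phi_z_right x y m z
    _ = Phi x y (Psi x y z * m) := by rw [hm]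
    _ = (y.comp x) * z * Phi x y m := (Phi_z_left x y m z).symm
    _ = (z * (y.comp x)) * Phi x y m := by rw [hz]
    _ = z * ((y.comp x) * Phi x y m) := by rw [mul_assoc]
    _ = z * Phi x y ((x.comp y) * m) := by rw [Phi_b_mul]


section CJ

variable (x : F →L[ℂ] E) (y : E →L[ℂ] F)

lemma cline (e : E →L[ℂ] E) (h : IsGDrazinInverseB (x.comp y) e) :
    IsGDrazinInverseB (y.comp x) (Phi x y (e * e)) := by
  obtain ⟨h1, h2, h3⟩ := h
  set a := x.comp y with ha
  have hea : e * a = a * e := h2 a rfl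
  -- a * (e*e) = e and (e*e) * a = e
  have hae2 : a * (e * e) = e := by
    rw [← mul_assoc, ← hea]
    exact h1.symm
  have he2a : (e * e) * a = e := by
    rw [mul_assoc, hea, ← mul_assoc]
    exact h1.symm
  set m : E →L[ℂ] E := (e * e) * e with hm
  have hma : m * a = e * e := by
    rw [hm, mul_assoc, hea, ← mul_assoc, he2a]
  have ham : a * m = e * e := by
    rw [hm, ← mul_assoc, hae2]
  refine ⟨?_, ?_, ?_⟩
  · -- f = f * (y∘x) * f
    have : Phi x y (e * e) * (y.comp x) * Phi x y (e * e) = Phi x y (e * e) := by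
      rw [Phi_mul_b, he2a, Phi_mul x y e (e*e), ← mul_assoc, ← h1]
    exact this.symm
  · intro z hz
    have hΨa : Psi x y z * a = a * Psi x y z := by
      rw [Psi_a_right, hz, ← Psi_a_left]
    have heΨ : e * Psi x y z = Psi x y z * e := h2 _ hΨa
    have hCe : Commute e (Psi x y z) := heΨ
    have hCm : Commute m (Psi x y z) := (hCe.mul_left hCe).mul_left hCe
    have hchain := chainPhi x y m z hz hCm.eq
    rw [hma, ham] at hchain
    exact hchain
  · have hbf : (y.comp x) * Phi x y (e * e) = Phi x y e := by
      rw [Phi_b_mul, hae2]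
    have hb2f : (y.comp x) ^ 2 * Phi x y (e * e) = Phi x y (a * e) := by
      rw [sq, mul_assoc, hbf, Phi_b_mul]
    have hkey : (y.comp x) - (y.comp x) ^ 2 * Phi x y (e * e) = Phi x y (1 - a * e) := by
      rw [hb2f, Phi_sub, Phi_one]
    show spectralRadius ℂ _ = 0
    rw [hkey]
    apply Phi_qn
    have : (1 - a * e) * a = a - a ^ 2 * e := by
      rw [one_sub_mul, mul_assoc, hea, ← mul_assoc, ← sq]
    rw [this]
    exact h3


lemma jacobson1 (e : E →L[ℂ] E) (h : IsGDrazinInverseB (1 - x.comp y) e) :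
    ∃ f, IsGDrazinInverseB (1 - y.comp x) f := by
  obtain ⟨he1, he2, he3⟩ := h
  set a := x.comp y with ha
  set b := y.comp x with hb
  set al := (1 : E →L[ℂ] E) - a with hal
  clear_value al
  have hale : e * al = al * e := he2 al rfl
  have h1a : (1 : E →L[ℂ] E) - al = a := by rw [hal]; abel
  have hae : e * a = a * e := by
    have h' : e * (1 - al) = (1 - al) * e := by rw [mul_one_sub, one_sub_mul, hale]
    rwa [h1a] at h'
  set p := (1 : E →L[ℂ] E) - al * e with hp
  clear_value p
  have hale2 : al * (e * e) = e := by rw [← mul_assoc, ← hale]; exact he1.symm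
  have hpe : p * e = 0 := by rw [hp, one_sub_mul, mul_assoc, hale2, sub_self]
  have hep : e * p = 0 := by rw [hp, mul_one_sub, ← mul_assoc, ← he1, sub_self]
  have halp : al * p = p * al := by rw [hp, mul_one_sub, one_sub_mul, mul_assoc al e al, hale]
  have halee : (al * e) * (al * e) = al * e := by
    rw [mul_assoc al e (al * e), ← mul_assoc e al e, ← he1]
  have hpp : p * p = p := by rw [hp, one_sub_mul, mul_one_sub, halee, sub_self, sub_zero]
  have hsrp : spectralRadius ℂ (al * p) = 0 := by
    have h3 : IsQuasinilpotentB (al - al ^ 2 * e) := he3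
    have heq : al * p = al - al ^ 2 * e := by rw [hp, mul_one_sub, ← mul_assoc, ← sq]
    rw [heq]; exact h3
  obtain ⟨k, hk1, hk2⟩ := exists_inv_one_sub (al * p) hsrp
  obtain ⟨j, hj1, hj2⟩ := exists_inv_one_add (al * p) hsrp
  -- commutation infrastructure
  have Ceal : Commute e al := hale
  have Cea : Commute e a := hae
  have Cep : Commute e p := by
    rw [hp]; exact (Commute.one_right e).sub_right (Ceal.mul_right (Commute.refl e))
  have Calp : Commute al p := halp
  have Caal : Commute a al := by rw [hal]; exact (Commute.one_right a).sub_right (Commute.refl a)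
  have Cap : Commute a p := by
    rw [hp]; exact (Commute.one_right a).sub_right (Caal.mul_right Cea.symm)
  have Calk : Commute al k :=
    comm_of_inv hk1 hk2 ((Commute.one_right al).sub_right ((Commute.refl al).mul_right Calp)).eq
  have Cpk : Commute p k :=
    comm_of_inv hk1 hk2 ((Commute.one_right p).sub_right (Calp.symm.mul_right (Commute.refl p))).eq
  have Cek : Commute e k :=
    comm_of_inv hk1 hk2 ((Commute.one_right e).sub_right (Ceal.mul_right Cep)).eq
  have Cak : Commute a k :=
    comm_of_inv hk1 hk2 ((Commute.one_right a).sub_right (Caal.mul_right Cap)).eq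
  have Calj : Commute al j :=
    comm_of_inv hj1 hj2 ((Commute.one_right al).add_right ((Commute.refl al).mul_right Calp)).eq
  have Cpj : Commute p j :=
    comm_of_inv hj1 hj2 ((Commute.one_right p).add_right (Calp.symm.mul_right (Commute.refl p))).eq
  -- key product identities
  have hx1 : p * (al * p) = al * p := by rw [← mul_assoc, ← halp, mul_assoc, hpp]
  have hpa : p * a = p - al * p := by rw [← h1a, mul_one_sub, ← halp]
  have hppk : p * (1 - al * p) = p * a := by
    have hlhs : p * (1 - al * p) = p - al * p := by rw [mul_one_sub, hx1]
    rw [hlhs, hpa]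
  have hpka : (p * k) * a = p := by
    have h0 : (p * (1 - al * p)) * k = p := by rw [mul_assoc, hk1, mul_one]
    rw [hppk] at h0
    calc (p * k) * a = p * (k * a) := by rw [mul_assoc]
      _ = p * (a * k) := by rw [← Cak.eq]
      _ = (p * a) * k := by rw [← mul_assoc]
      _ = p := h0
  have hapk : a * (p * k) = p := by
    calc a * (p * k) = (a * p) * k := by rw [← mul_assoc]
      _ = (p * a) * k := by rw [Cap.eq]
      _ = p * (a * k) := by rw [mul_assoc]
      _ = p * (k * a) := by rw [Cak.eq]
      _ = (p * k) * a := by rw [← mul_assoc]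
      _ = p := hpka
  -- omega
  set om := (e + p) * j with hom
  clear_value om
  have hsum : al * e + p = (1 : E →L[ℂ] E) := by rw [hp]; abel
  have hkey1 : (al + p) * (e + p) = 1 + al * p := by
    calc (al + p) * (e + p) = al * e + al * p + (p * e + p * p) := by
          rw [add_mul, mul_add, mul_add]
      _ = al * e + al * p + p := by rw [hpe, hpp, zero_add]
      _ = 1 + al * p := by rw [← hsum]; abel
  have hkey2 : (e + p) * (al + p) = 1 + al * p := by
    calc (e + p) * (al + p) = e * al + e * p + (p * al + p * p) := by
          rw [add_mul, mul_add, mul_add]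
      _ = al * e + 0 + (al * p + p) := by rw [hale, hep, ← halp, hpp]
      _ = 1 + al * p := by rw [← hsum]; abel
  have hom1 : (al + p) * om = 1 := by rw [hom, ← mul_assoc, hkey1, hj1]
  have hom2 : om * (al + p) = 1 := by
    rw [hom, mul_assoc]
    have hjc : j * (al + p) = (al + p) * j := ((Calj.symm).add_right (Cpj.symm)).eq
    rw [hjc, ← mul_assoc, hkey2, hj1]
  set g := (1 : E →L[ℂ] E) - p * k with hg
  clear_value g
  have hag : a * g = a - p := by rw [hg, mul_one_sub, hapk]
  have hga : g * a = a - p := by rw [hg, one_sub_mul, hpka]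
  have h1ag : (1 : E →L[ℂ] E) - a * g = al + p := by rw [hag, hal]; abel
  have h1ga : (1 : E →L[ℂ] E) - g * a = al + p := by rw [hga, hal]; abel
  set hh := om * g with hhh
  clear_value hh
  have hth : (al + p) * hh = g := by rw [hhh, ← mul_assoc, hom1, one_mul]
  have hht : hh * (al + p) = g := by
    have Cgalp : Commute g (al + p) := by
      rw [hg]
      have c1 : Commute (p * k) (al + p) :=
        ((Calp.symm).add_right (Commute.refl p)).mul_left ((Calk.symm).add_right (Cpk.symm))
      exact (Commute.one_left (al + p)).sub_left c1
    calc hh * (al + p) = om * (g * (al + p)) := by rw [hhh, mul_assoc]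
      _ = om * ((al + p) * g) := by rw [Cgalp.eq]
      _ = (om * (al + p)) * g := by rw [← mul_assoc]
      _ = g := by rw [hom2, one_mul]
  -- Phi level
  set p' := Phi x y (p * k) with hp'
  clear_value p'
  have hp'2 : p' * p' = p' := by
    rw [hp', Phi_mul]
    congr 1
    rw [hpka, ← mul_assoc, hpp]
  have hbp' : b * p' = Phi x y p := by rw [hp', Phi_b_mul, hapk]
  have hp'b : p' * b = Phi x y p := by rw [hp', Phi_mul_b, hpka]
  set be := (1 : F →L[ℂ] F) - b with hbe
  clear_value be
  have hbep' : be * p' = p' - Phi x y p := by rw [hbe, one_sub_mul, hbp']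
  have hp'be : p' * be = p' - Phi x y p := by rw [hbe, mul_one_sub, hp'b]
  have hbec : be * p' = p' * be := by rw [hbep', hp'be]
  set s := (1 : F →L[ℂ] F) - Phi x y g with hs
  clear_value s
  have hsbe : s = be + p' := by
    rw [hs, hg, Phi_sub, Phi_one, ← hb, hbe, hp']
    abel
  set s' := (1 : F →L[ℂ] F) + Phi x y hh with hs'
  clear_value s'
  have hgah : (g * a) * hh = hh - g := by
    have e1 : ((1 : E →L[ℂ] E) - g * a) * hh = g := by rw [h1ga, hth]
    rw [one_sub_mul] at e1
    exact eq_sub_of_add_eq' (sub_eq_iff_eq_add.mp e1).symm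
  have hhag : (hh * a) * g = hh - g := by
    have e1 : hh * ((1 : E →L[ℂ] E) - a * g) = g := by rw [h1ag, hht]
    rw [mul_one_sub, ← mul_assoc] at e1
    exact eq_sub_of_add_eq' (sub_eq_iff_eq_add.mp e1).symm
  have hss' : s * s' = 1 := by
    rw [hs, hs', one_sub_mul, mul_one_add, Phi_mul, hgah, Phi_sub]
    abel
  have hs's : s' * s = 1 := by
    rw [hs, hs', mul_one_sub, one_add_mul, Phi_mul, hhag, Phi_sub]
    abel
  -- double commutant for p'
  have hpkk_a : ((p * k) * k) * a = p * k := by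
    calc ((p * k) * k) * a = (p * k) * (k * a) := by rw [mul_assoc]
      _ = (p * k) * (a * k) := by rw [← Cak.eq]
      _ = ((p * k) * a) * k := by rw [← mul_assoc]
      _ = p * k := by rw [hpka]
  have ha_pkk : a * ((p * k) * k) = p * k := by
    calc a * ((p * k) * k) = (a * (p * k)) * k := by rw [← mul_assoc]
      _ = p * k := by rw [hapk]
  have hp'z : ∀ z : F →L[ℂ] F, z * b = b * z → p' * z = z * p' := by
    intro z hz
    have hPsia : Psi x y z * a = a * Psi x y z := by
      rw [Psi_a_right, hz, ← Psi_a_left]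
    have hePsi : e * Psi x y z = Psi x y z * e :=
      he2 _ (by rw [hal, mul_one_sub, one_sub_mul, hPsia])
    have CPsia : Commute (Psi x y z) a := hPsia
    have CPsial : Commute (Psi x y z) al := by
      rw [hal]; exact (Commute.one_right _).sub_right CPsia
    have CPsie : Commute (Psi x y z) e := (show Commute e (Psi x y z) from hePsi).symm
    have CPsip : Commute (Psi x y z) p := by
      rw [hp]; exact (Commute.one_right _).sub_right (CPsial.mul_right CPsie)
    have CPsik : Commute (Psi x y z) k :=
      comm_of_inv hk1 hk2 ((Commute.one_right _).sub_right (CPsial.mul_right CPsip)).eq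
    have Cm1 : ((p * k) * k) * Psi x y z = Psi x y z * ((p * k) * k) :=
      (((CPsip.symm).mul_left (CPsik.symm)).mul_left (CPsik.symm)).eq
    have hcore := chainPhi x y ((p * k) * k) z hz Cm1
    rw [hpkk_a, ha_pkk] at hcore
    rw [hp']
    exact hcore
  -- assembling f
  have hp's : p' * s = s * p' := by rw [hsbe, mul_add, add_mul, ← hbec, hp'2]
  have hp's' : p' * s' = s' * p' := comm_of_inv hss' hs's hp's
  have hbes : be * s = s * be := by rw [hsbe, mul_add, add_mul, hbec]
  have hbes' : be * s' = s' * be := comm_of_inv hss' hs's hbes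
  have h1p'be : (1 - p') * be = be * (1 - p') := by rw [one_sub_mul, mul_one_sub, hbec]
  have hp'1p' : p' * (1 - p') = 0 := by rw [mul_one_sub, hp'2, sub_self]
  have h1p'sq : ((1 : F →L[ℂ] F) - p') * (1 - p') = 1 - p' := by
    rw [one_sub_mul p' ((1 : F →L[ℂ] F) - p'), hp'1p', sub_zero]
  have hE0 : (s' * be) * (1 - p') = 1 - p' := by
    have h1 : s' * be = s' * s - s' * p' := by rw [hsbe, mul_add]; abel
    rw [h1, hs's, one_sub_mul, mul_assoc, hp'1p', mul_zero, sub_zero]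
  have hfbe : (s' * (1 - p')) * be = 1 - p' := by
    rw [mul_assoc, h1p'be, ← mul_assoc, hE0]
  have hbef : be * (s' * (1 - p')) = 1 - p' := by
    rw [← mul_assoc, hbes', hE0]
  refine ⟨s' * (1 - p'), ?_, ?_, ?_⟩
  · rw [hfbe]
    have h1p's' : (1 - p') * s' = s' * (1 - p') := by rw [one_sub_mul, mul_one_sub, hp's']
    rw [← mul_assoc, h1p's', mul_assoc, h1p'sq]
  · intro z hzbe
    have hz : z * b = b * z := by
      have h' := hzbe
      rw [hbe, mul_one_sub, one_sub_mul] at h'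
      exact sub_right_inj.mp h'
    have hp'zz := hp'z z hz
    have hzs : z * s = s * z := by
      rw [hsbe, mul_add, add_mul, hzbe, ← hp'zz]
    have hzs' : z * s' = s' * z := comm_of_inv hss' hs's hzs
    have h1p'z : (1 - p') * z = z * (1 - p') := by rw [one_sub_mul, mul_one_sub, hp'zz]
    calc (s' * (1 - p')) * z = s' * ((1 - p') * z) := by rw [mul_assoc]
      _ = s' * (z * (1 - p')) := by rw [h1p'z]
      _ = (s' * z) * (1 - p') := by rw [← mul_assoc]
      _ = (z * s') * (1 - p') := by rw [← hzs']
      _ = z * (s' * (1 - p')) := by rw [mul_assoc]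
  · show spectralRadius ℂ _ = 0
    have hbf2 : be - be ^ 2 * (s' * (1 - p')) = Phi x y (p * k - p) := by
      rw [sq, mul_assoc, hbef, mul_one_sub, hbep', Phi_sub]
      rw [show Phi x y (p * k) = p' from hp'.symm]
      abel
    rw [hbf2]
    apply Phi_qn
    have harg : (p * k - p) * (x.comp y) = al * p := by
      rw [← ha, sub_mul, hpka, hpa]
      abel
    rw [harg]
    exact hsrp

end CJ

end Rect

lemma scaleGD {A : Type*} [NormedRing A] [NormedAlgebra ℂ A] {z eA : A} (c : ℂ) (hc : c ≠ 0)
    (h : IsGDrazinInverseB z eA) : IsGDrazinInverseB (c • z) (c⁻¹ • eA) := by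
  obtain ⟨h1, h2, h3⟩ := h
  refine ⟨?_, ?_, ?_⟩
  · conv_lhs => rw [h1]
    simp only [smul_mul_assoc, mul_smul_comm, smul_smul]
    congr 1
    field_simp
  · intro w hw
    have hw' : w * z = z * w := by
      have h' : c • (w * z) = c • (z * w) := by
        rw [← mul_smul_comm, ← smul_mul_assoc]; exact hw
      have := congrArg (fun t => c⁻¹ • t) h'
      simpa [smul_smul, inv_mul_cancel₀ hc] using this
    rw [smul_mul_assoc, mul_smul_comm, h2 w hw']
  · have hsq : (c • z) ^ 2 * (c⁻¹ • eA) = c • (z ^ 2 * eA) := by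
      simp only [smul_pow, smul_mul_assoc, mul_smul_comm, smul_smul]
      congr 1
      field_simp
    have hq : c • z - (c • z) ^ 2 * (c⁻¹ • eA) = c • (z - z ^ 2 * eA) := by
      rw [hsq, ← smul_sub]
    show spectralRadius ℂ _ = 0
    rw [hq]
    exact sr_smul_zero h3 c


section Master

variable {E : Type*} [NormedAddCommGroup E] [NormedSpace ℂ E]
variable {F : Type*} [NormedAddCommGroup F] [NormedSpace ℂ F]

lemma master (x : F →L[ℂ] E) (y : E →L[ℂ] F) (lam : ℂ)
    (h : ∃ e, IsGDrazinInverseB (lam • (1 : E →L[ℂ] E) - x.comp y) e) :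
    ∃ f, IsGDrazinInverseB (lam • (1 : F →L[ℂ] F) - y.comp x) f := by
  obtain ⟨e, he⟩ := h
  by_cases hlam : lam = 0
  · subst hlam
    rw [zero_smul, zero_sub, show -(x.comp y) = (-x).comp y from (neg_comp x y).symm] at he
    have hc := cline (-x) y e he
    rw [comp_neg] at hc
    rw [zero_smul, zero_sub]
    exact ⟨_, hc⟩
  · have h1 : IsGDrazinInverseB ((1 : E →L[ℂ] E) - (lam⁻¹ • x).comp y) (lam • e) := by
      have hsc := scaleGD lam⁻¹ (inv_ne_zero hlam) he
      rw [inv_inv] at hsc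
      have heq : lam⁻¹ • (lam • (1 : E →L[ℂ] E) - x.comp y) = 1 - (lam⁻¹ • x).comp y := by
        rw [smul_sub, smul_smul, inv_mul_cancel₀ hlam, one_smul, smul_comp]
      rwa [heq] at hsc
    obtain ⟨f, hf⟩ := jacobson1 (lam⁻¹ • x) y (lam • e) h1
    have heq2 : (1 : F →L[ℂ] F) - y.comp (lam⁻¹ • x)
        = lam⁻¹ • (lam • (1 : F →L[ℂ] F) - y.comp x) := by
      rw [smul_sub, smul_smul, inv_mul_cancel₀ hlam, one_smul, comp_smul]
    rw [heq2] at hf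
    have hfin := scaleGD lam hlam hf
    rw [smul_smul, mul_inv_cancel₀ hlam, one_smul] at hfin
    exact ⟨_, hfin⟩

end Master

section Kernel

variable {E : Type*} [NormedAddCommGroup E] [NormedSpace ℂ E]

lemma addnil (v q : E →L[ℂ] E) (hqv : q * v = 0) (hqq : q * q = 0) (lam : ℂ)
    (h : ∃ e, IsGDrazinInverseB (lam • (1 : E →L[ℂ] E) - v) e) :
    ∃ f, IsGDrazinInverseB (lam • (1 : E →L[ℂ] E) - (v + q)) f := by
  set K := LinearMap.ker (q : E →ₗ[ℂ] E) with hK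
  have hmemv : ∀ z : E, v z ∈ K := by
    intro z
    have h0 : (q * v) z = 0 := by rw [hqv]; rfl
    rw [ContinuousLinearMap.mul_apply] at h0
    exact LinearMap.mem_ker.mpr h0
  have hmemu : ∀ z : E, (v + q) z ∈ K := by
    intro z
    have h0 : (q * (v + q)) z = 0 := by rw [mul_add, hqv, hqq, add_zero]; rfl
    rw [ContinuousLinearMap.mul_apply] at h0
    exact LinearMap.mem_ker.mpr h0
  let ι : K →L[ℂ] E := K.subtypeL
  let vt : E →L[ℂ] K := v.codRestrict K hmemv
  let ut : E →L[ℂ] K := (v + q).codRestrict K hmemu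
  have hv : ι.comp vt = v := by
    ext z
    simp [ι, vt, Submodule.subtypeL_apply, ContinuousLinearMap.coe_codRestrict_apply,
      ContinuousLinearMap.comp_apply]
  have hu : ι.comp ut = v + q := by
    ext z
    simp [ι, ut, Submodule.subtypeL_apply, ContinuousLinearMap.coe_codRestrict_apply,
      ContinuousLinearMap.comp_apply]
  have hvu : vt.comp ι = ut.comp ι := by
    ext z
    have hz : q (↑z : E) = 0 := LinearMap.mem_ker.mp z.2
    simp [ι, vt, ut, ContinuousLinearMap.comp_apply,
      ContinuousLinearMap.coe_codRestrict_apply, Submodule.subtypeL_apply,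
      ContinuousLinearMap.add_apply, hz]
  have step1 := master ι vt lam (by rwa [hv])
  rw [hvu] at step1
  have step2 := master ut ι lam step1
  rw [hu] at step2
  exact step2

end Kernel

end GDProof

theorem stmt_15 {X : Type*} [NormedAddCommGroup X] [NormedSpace ℂ X] [CompleteSpace X]
    (A B C : X →L[ℂ] X)
    (h1 : (A * B * A) * B = (A * C * A) * B)
    (h2 : (A * B * A) * C = (A * C * A) * C) :
    gDrazinSpectrum (A * C) = gDrazinSpectrum (B * A) := by
  ext lam
  simp only [gDrazinSpectrum, Set.mem_setOf_eq]
  have hiff : (∃ e, IsGDrazinInverseB (lam • (1 : X →L[ℂ] X) - A * C) e) ↔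
      (∃ f, IsGDrazinInverseB (lam • (1 : X →L[ℂ] X) - B * A) f) := by
    constructor
    · intro h
      have hqv : (A * B - A * C) * (A * C) = 0 := by
        rw [sub_mul, show (A * B) * (A * C) = A * B * A * C from by rw [← mul_assoc],
          show (A * C) * (A * C) = A * C * A * C from by rw [← mul_assoc], h2, sub_self]
      have hqq : (A * B - A * C) * (A * B - A * C) = 0 := by
        have hqu : (A * B - A * C) * (A * B) = 0 := by
          rw [sub_mul, show (A * B) * (A * B) = A * B * A * B from by rw [← mul_assoc],
            show (A * C) * (A * B) = A * C * A * B from by rw [← mul_assoc], h1, sub_self]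
        rw [mul_sub, hqu, hqv, sub_self]
      have step := GDProof.addnil (A * C) (A * B - A * C) hqv hqq lam h
      rw [show A * C + (A * B - A * C) = A * B from by abel] at step
      obtain ⟨e, he⟩ := step
      have hsw := GDProof.master A B lam
        ⟨e, by rwa [show A.comp B = A * B from (ContinuousLinearMap.mul_def A B).symm]⟩
      obtain ⟨f, hf⟩ := hsw
      exact ⟨f, by rwa [show B.comp A = B * A from (ContinuousLinearMap.mul_def B A).symm] at hf⟩
    · intro h
      obtain ⟨e, he⟩ := h
      have hsw := GDProof.master B A lam
        ⟨e, by rwa [show B.comp A = B * A from (ContinuousLinearMap.mul_def B A).symm]⟩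
      obtain ⟨f, hf⟩ := hsw
      rw [show A.comp B = A * B from (ContinuousLinearMap.mul_def A B).symm] at hf
      have hqv : (A * C - A * B) * (A * B) = 0 := by
        rw [sub_mul, show (A * C) * (A * B) = A * C * A * B from by rw [← mul_assoc],
          show (A * B) * (A * B) = A * B * A * B from by rw [← mul_assoc], ← h1, sub_self]
      have hqq : (A * C - A * B) * (A * C - A * B) = 0 := by
        have hqc : (A * C - A * B) * (A * C) = 0 := by
          rw [sub_mul, show (A * C) * (A * C) = A * C * A * C from by rw [← mul_assoc],
            show (A * B) * (A * C) = A * B * A * C from by rw [← mul_assoc], ← h2, sub_self]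
        rw [mul_sub, hqc, hqv, sub_self]
      have step := GDProof.addnil (A * B) (A * C - A * B) hqv hqq lam ⟨f, hf⟩
      rw [show A * B + (A * C - A * B) = A * C from by abel] at step
      exact step
  exact not_congr hiff
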